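/- Let K ⊂ ℝ² be compact and let B ⊂ ℝ² be a bounded open set with K ⊂ B. Let μ be a probability measure on ℝ² with support contained in K and assume the logarithmic energy is finite: −∫∫ log|y−z| d(μ⊗μ)(y,z) < +∞. Then the function γ(y,z) := ∫_B 1/(|x−y| |x−z|) dx belongs to L¹(B×B, μ⊗μ), i.e. ∫∫ γ(y,z) d(μ⊗μ)(y,z) < +∞. -/

import Mathlib

open MeasureTheory Set Metric
open scoped ENNReal

private lemma lint_Ioc_inv {a b : ℝ} (ha : 0 < a) (hab : a ≤ b) :
    ∫⁻ t in Set.Ioc a b, ENNReal.ofReal t⁻¹ = ENNReal.ofReal (Real.log b - Real.log a) := by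
  have hb : 0 < b := ha.trans_le hab
  have hint : IntegrableOn (fun t : ℝ => t⁻¹) (Set.Ioc a b) := by
    have : IntervalIntegrable (fun t : ℝ => t⁻¹) volume a b := by
      apply intervalIntegral.intervalIntegrable_inv
      · intro x hx
        have : (0:ℝ) < x := lt_of_lt_of_le ha (by
          rcases hx with ⟨h1, h2⟩
          simpa [min_eq_left hab] using h1)
        exact this.ne'
      · exact continuousOn_id
    simpa [intervalIntegrable_iff_integrableOn_Ioc_of_le hab] using this
  rw [← ofReal_integral_eq_lintegral_ofReal hint ?_]
  · congr 1
    rw [← intervalIntegral.integral_of_le hab, integral_inv_of_pos ha hb,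
      Real.log_div hb.ne' ha.ne']
  · filter_upwards [self_mem_ae_restrict measurableSet_Ioc] with t ht
    exact inv_nonneg.2 (le_of_lt (ha.trans ht.1))

private lemma lint_Ioi_inv_sq {c : ℝ} (hc : 0 < c) :
    ∫⁻ t in Set.Ioi c, ENNReal.ofReal ((t⁻¹) ^ 2) = ENNReal.ofReal c⁻¹ := by
  have hcong : ∀ t ∈ Set.Ioi c, ENNReal.ofReal ((t⁻¹) ^ 2) = ENNReal.ofReal (t ^ (-2 : ℝ)) := by
    intro t ht
    have ht0 : 0 < t := hc.trans ht
    congr 1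
    rw [show (-2 : ℝ) = -(2:ℕ) by norm_num, Real.rpow_neg ht0.le, Real.rpow_natCast, inv_pow]
  rw [setLIntegral_congr_fun measurableSet_Ioi hcong]
  rw [← ofReal_integral_eq_lintegral_ofReal (integrableOn_Ioi_rpow_of_lt (by norm_num) hc) ?_]
  · rw [integral_Ioi_rpow_of_lt (by norm_num) hc]
    norm_num
    rw [Real.rpow_neg_one]
  · filter_upwards [self_mem_ae_restrict measurableSet_Ioi] with t ht
    exact Real.rpow_nonneg (le_of_lt (hc.trans ht)) _

private lemma lint_Ioi_inv {c : ℝ} (hc : 0 < c) :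
    ∫⁻ t in Set.Ioi c, ENNReal.ofReal t⁻¹ = ∞ := by
  refine ENNReal.eq_top_of_forall_nnreal_le fun r => ?_
  set b := max c (Real.exp (r + Real.log c)) with hbdef
  have hcb : c ≤ b := le_max_left _ _
  have h1 : (r : ℝ≥0∞) ≤ ENNReal.ofReal (Real.log b - Real.log c) := by
    rw [← ENNReal.ofReal_coe_nnreal]
    apply ENNReal.ofReal_le_ofReal
    have hexp : Real.exp (r + Real.log c) ≤ b := le_max_right _ _
    have hlb : (r : ℝ) + Real.log c ≤ Real.log b := by
      calc (r : ℝ) + Real.log c = Real.log (Real.exp ((r : ℝ) + Real.log c)) :=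
        (Real.log_exp _).symm
      _ ≤ Real.log b := Real.log_le_log (Real.exp_pos _) hexp
    linarith
  calc (r : ℝ≥0∞) ≤ ENNReal.ofReal (Real.log b - Real.log c) := h1
  _ = ∫⁻ t in Set.Ioc c b, ENNReal.ofReal t⁻¹ := (lint_Ioc_inv hc hcb).symm
  _ ≤ ∫⁻ t in Set.Ioi c, ENNReal.ofReal t⁻¹ := lintegral_mono_set Set.Ioc_subset_Ioi_self


noncomputable section

local notation "E2" => EuclideanSpace ℝ (Fin 2)
local notation "V" => volume (Metric.ball (0 : EuclideanSpace ℝ (Fin 2)) 1)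

private lemma restr_le_ball (c : E2) {r : ℝ} (hr : 0 ≤ r) (s : Set E2) :
    (volume.restrict (Metric.ball c r)) s ≤ ENNReal.ofReal (r ^ 2) * V := by
  calc (volume.restrict (Metric.ball c r)) s ≤ (volume.restrict (Metric.ball c r)) univ :=
        measure_mono (subset_univ _)
  _ = volume (Metric.ball c r) := by rw [Measure.restrict_apply_univ]
  _ = ENNReal.ofReal (r ^ 2) * V := by
        rw [Measure.addHaar_ball volume c hr, finrank_euclideanSpace_fin]

private lemma lint_ball (c : E2) {r : ℝ} (hr : 0 < r) :
    ∫⁻ x in Metric.ball c r, ENNReal.ofReal ‖x - c‖⁻¹ ≤ ENNReal.ofReal (2 * r) * V := by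
  have hmeas : Measurable fun x : E2 => ‖x - c‖⁻¹ :=
    (continuous_id.sub continuous_const).norm.measurable.inv
  rw [lintegral_eq_lintegral_meas_lt _ (ae_of_all _ fun x => inv_nonneg.2 (norm_nonneg _))
    hmeas.aemeasurable]
  have hsplit : Set.Ioi (0:ℝ) = Set.Ioc 0 r⁻¹ ∪ Set.Ioi r⁻¹ :=
    (Set.Ioc_union_Ioi_eq_Ioi (inv_pos.2 hr).le).symm
  have h1 : ∫⁻ t in Set.Ioc (0:ℝ) r⁻¹,
      (volume.restrict (Metric.ball c r)) {a | t < ‖a - c‖⁻¹} ≤ ENNReal.ofReal r * V := by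
    calc ∫⁻ t in Set.Ioc (0:ℝ) r⁻¹, (volume.restrict (Metric.ball c r)) {a | t < ‖a - c‖⁻¹}
        ≤ ∫⁻ _ in Set.Ioc (0:ℝ) r⁻¹, ENNReal.ofReal (r ^ 2) * V :=
          lintegral_mono fun t => restr_le_ball c hr.le _
      _ = ENNReal.ofReal (r ^ 2) * V * volume (Set.Ioc (0:ℝ) r⁻¹) := setLIntegral_const _ _
      _ = ENNReal.ofReal r * V := by
          rw [Real.volume_Ioc, sub_zero, mul_right_comm, ← ENNReal.ofReal_mul (by positivity)]
          congr 2
          rw [pow_two]; field_simp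
  have h2 : ∫⁻ t in Set.Ioi r⁻¹,
      (volume.restrict (Metric.ball c r)) {a | t < ‖a - c‖⁻¹} ≤ ENNReal.ofReal r * V := by
    have hb2 : ∀ t ∈ Set.Ioi r⁻¹,
        (volume.restrict (Metric.ball c r)) {a | t < ‖a - c‖⁻¹} ≤
          ENNReal.ofReal ((t⁻¹) ^ 2) * V := by
      intro t ht
      have ht0 : (0:ℝ) < t := lt_trans (inv_pos.2 hr) ht
      have hsub : {a : E2 | t < ‖a - c‖⁻¹} ∩ Metric.ball c r ⊆ Metric.ball c t⁻¹ := by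
        rintro a ⟨ha1, _⟩
        have hna : ‖a - c‖ < t⁻¹ := by
          by_contra h
          push_neg at h
          have h2 : ‖a - c‖⁻¹ ≤ t := by
            have := inv_anti₀ (inv_pos.2 ht0) h
            rwa [inv_inv] at this
          exact absurd ha1 (not_lt.2 h2)
        simpa [Metric.mem_ball, dist_eq_norm] using hna
      calc (volume.restrict (Metric.ball c r)) {a | t < ‖a - c‖⁻¹}
          = volume ({a : E2 | t < ‖a - c‖⁻¹} ∩ Metric.ball c r) :=
            Measure.restrict_apply' measurableSet_ball
        _ ≤ volume (Metric.ball c t⁻¹) := measure_mono hsub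
        _ = ENNReal.ofReal ((t⁻¹) ^ 2) * V := by
            rw [Measure.addHaar_ball volume c (inv_pos.2 ht0).le, finrank_euclideanSpace_fin]
    calc ∫⁻ t in Set.Ioi r⁻¹, (volume.restrict (Metric.ball c r)) {a | t < ‖a - c‖⁻¹}
        ≤ ∫⁻ t in Set.Ioi r⁻¹, ENNReal.ofReal ((t⁻¹) ^ 2) * V :=
          lintegral_mono_ae ((ae_restrict_iff' measurableSet_Ioi).2 (ae_of_all _ hb2))
      _ = (∫⁻ t in Set.Ioi r⁻¹, ENNReal.ofReal ((t⁻¹) ^ 2)) * V :=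
          lintegral_mul_const' _ _ measure_ball_lt_top.ne
      _ = ENNReal.ofReal r * V := by rw [lint_Ioi_inv_sq (inv_pos.2 hr), inv_inv]
  calc ∫⁻ t in Set.Ioi (0:ℝ), (volume.restrict (Metric.ball c r)) {a | t < ‖a - c‖⁻¹}
      ≤ (∫⁻ t in Set.Ioc (0:ℝ) r⁻¹, (volume.restrict (Metric.ball c r)) {a | t < ‖a - c‖⁻¹}) +
        ∫⁻ t in Set.Ioi r⁻¹, (volume.restrict (Metric.ball c r)) {a | t < ‖a - c‖⁻¹} := by
        rw [hsplit]; exact lintegral_union_le _ _ _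
    _ ≤ ENNReal.ofReal r * V + ENNReal.ofReal r * V := add_le_add h1 h2
    _ = ENNReal.ofReal (2 * r) * V := by
        rw [two_mul, ENNReal.ofReal_add hr.le hr.le, add_mul]

private lemma lint_annulus (c : E2) {r R : ℝ} (hr : 0 < r) (hrR : r ≤ R) :
    ∫⁻ x in Metric.ball c R \ Metric.ball c r, ENNReal.ofReal ((‖x - c‖ * ‖x - c‖)⁻¹) ≤
      (1 + ENNReal.ofReal (2 * (Real.log R - Real.log r))) * V := by
  have hR : (0:ℝ) < R := hr.trans_le hrR
  set S : Set E2 := Metric.ball c R \ Metric.ball c r with hS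
  have hSmeas : MeasurableSet S := measurableSet_ball.diff measurableSet_ball
  have hmeas : Measurable fun x : E2 => (‖x - c‖ * ‖x - c‖)⁻¹ :=
    (((continuous_id.sub continuous_const).norm.mul
      (continuous_id.sub continuous_const).norm).measurable).inv
  rw [lintegral_eq_lintegral_meas_lt _
    (ae_of_all _ fun x => inv_nonneg.2 (mul_nonneg (norm_nonneg _) (norm_nonneg _)))
    hmeas.aemeasurable]
  set A : ℝ := (R * R)⁻¹ with hA
  set Bv : ℝ := (r * r)⁻¹ with hBv
  have hA0 : (0:ℝ) < A := inv_pos.2 (by positivity)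
  have hB0 : (0:ℝ) < Bv := inv_pos.2 (by positivity)
  have hAB : A ≤ Bv := by
    apply inv_anti₀ (by positivity)
    exact mul_le_mul hrR hrR hr.le hR.le
  have hsplit : Set.Ioi (0:ℝ) = Set.Ioc 0 A ∪ (Set.Ioc A Bv ∪ Set.Ioi Bv) := by
    rw [Set.Ioc_union_Ioi_eq_Ioi hAB, Set.Ioc_union_Ioi_eq_Ioi hA0.le]
  -- piece 1
  have hrestrS : ∀ s : Set E2, (volume.restrict S) s ≤ volume (Metric.ball c R) := by
    intro s
    calc (volume.restrict S) s ≤ (volume.restrict S) univ := measure_mono (subset_univ _)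
    _ = volume S := by rw [Measure.restrict_apply_univ]
    _ ≤ volume (Metric.ball c R) := measure_mono diff_subset
  have h1 : ∫⁻ t in Set.Ioc (0:ℝ) A,
      (volume.restrict S) {a | t < (‖a - c‖ * ‖a - c‖)⁻¹} ≤ V := by
    calc ∫⁻ t in Set.Ioc (0:ℝ) A, (volume.restrict S) {a | t < (‖a - c‖ * ‖a - c‖)⁻¹}
        ≤ ∫⁻ _ in Set.Ioc (0:ℝ) A, ENNReal.ofReal (R ^ 2) * V :=
          lintegral_mono fun t => (hrestrS _).trans_eq (by
            rw [Measure.addHaar_ball volume c hR.le, finrank_euclideanSpace_fin])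
      _ = ENNReal.ofReal (R ^ 2) * V * volume (Set.Ioc (0:ℝ) A) := setLIntegral_const _ _
      _ ≤ V := by
          rw [Real.volume_Ioc, sub_zero, mul_right_comm, ← ENNReal.ofReal_mul (by positivity)]
          have : R ^ 2 * A = 1 := by rw [hA, pow_two]; field_simp
          rw [this, ENNReal.ofReal_one, one_mul]
  -- piece 2
  have h2 : ∫⁻ t in Set.Ioc A Bv,
      (volume.restrict S) {a | t < (‖a - c‖ * ‖a - c‖)⁻¹} ≤
        ENNReal.ofReal (2 * (Real.log R - Real.log r)) * V := by
    have hb2 : ∀ t ∈ Set.Ioc A Bv,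
        (volume.restrict S) {a | t < (‖a - c‖ * ‖a - c‖)⁻¹} ≤ ENNReal.ofReal t⁻¹ * V := by
      intro t ht
      have ht0 : (0:ℝ) < t := hA0.trans_le ht.1.le
      have hsub : {a : E2 | t < (‖a - c‖ * ‖a - c‖)⁻¹} ∩ S ⊆
          Metric.ball c (Real.sqrt t⁻¹) := by
        rintro a ⟨ha1, _⟩
        have hq : ‖a - c‖ * ‖a - c‖ < t⁻¹ := by
          by_contra h
          push_neg at h
          have h2 : (‖a - c‖ * ‖a - c‖)⁻¹ ≤ t := by
            have := inv_anti₀ (inv_pos.2 ht0) h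
            rwa [inv_inv] at this
          exact absurd ha1 (not_lt.2 h2)
        have : ‖a - c‖ < Real.sqrt t⁻¹ := by
          rw [show ‖a - c‖ * ‖a - c‖ = ‖a - c‖ ^ 2 by ring] at hq
          exact (Real.lt_sqrt (norm_nonneg _)).2 hq
        simpa [Metric.mem_ball, dist_eq_norm] using this
      calc (volume.restrict S) {a | t < (‖a - c‖ * ‖a - c‖)⁻¹}
          = volume ({a : E2 | t < (‖a - c‖ * ‖a - c‖)⁻¹} ∩ S) :=
            Measure.restrict_apply' hSmeas
        _ ≤ volume (Metric.ball c (Real.sqrt t⁻¹)) := measure_mono hsub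
        _ = ENNReal.ofReal t⁻¹ * V := by
            rw [Measure.addHaar_ball volume c (Real.sqrt_nonneg _), finrank_euclideanSpace_fin,
              Real.sq_sqrt (inv_nonneg.2 ht0.le)]
    calc ∫⁻ t in Set.Ioc A Bv, (volume.restrict S) {a | t < (‖a - c‖ * ‖a - c‖)⁻¹}
        ≤ ∫⁻ t in Set.Ioc A Bv, ENNReal.ofReal t⁻¹ * V :=
          lintegral_mono_ae ((ae_restrict_iff' measurableSet_Ioc).2 (ae_of_all _ hb2))
      _ = (∫⁻ t in Set.Ioc A Bv, ENNReal.ofReal t⁻¹) * V :=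
          lintegral_mul_const' _ _ measure_ball_lt_top.ne
      _ = ENNReal.ofReal (2 * (Real.log R - Real.log r)) * V := by
          rw [lint_Ioc_inv hA0 hAB]
          congr 2
          rw [hBv, hA, Real.log_inv, Real.log_inv, Real.log_mul hr.ne' hr.ne',
            Real.log_mul hR.ne' hR.ne']
          ring
  -- piece 3
  have h3 : ∫⁻ t in Set.Ioi Bv,
      (volume.restrict S) {a | t < (‖a - c‖ * ‖a - c‖)⁻¹} = 0 := by
    have hz : ∀ t ∈ Set.Ioi Bv,
        (volume.restrict S) {a | t < (‖a - c‖ * ‖a - c‖)⁻¹} = 0 := by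
      intro t ht
      rw [Measure.restrict_apply' hSmeas]
      have hemp : {a : E2 | t < (‖a - c‖ * ‖a - c‖)⁻¹} ∩ S = ∅ := by
        rw [Set.eq_empty_iff_forall_notMem]
        rintro a ⟨ha1, haS⟩
        have hra : r ≤ ‖a - c‖ := by
          have := haS.2
          simpa [Metric.mem_ball, dist_eq_norm, not_lt] using this
        have hfa : (‖a - c‖ * ‖a - c‖)⁻¹ ≤ Bv := by
          rw [hBv]
          apply inv_anti₀ (by positivity)
          exact mul_le_mul hra hra hr.le (hr.le.trans hra)
        exact absurd ha1 (not_lt.2 (hfa.trans ht.le))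
      rw [hemp, measure_empty]
    rw [setLIntegral_congr_fun measurableSet_Ioi hz, lintegral_zero]
  calc ∫⁻ t in Set.Ioi (0:ℝ), (volume.restrict S) {a | t < (‖a - c‖ * ‖a - c‖)⁻¹}
      ≤ (∫⁻ t in Set.Ioc (0:ℝ) A, (volume.restrict S) {a | t < (‖a - c‖ * ‖a - c‖)⁻¹}) +
        ((∫⁻ t in Set.Ioc A Bv, (volume.restrict S) {a | t < (‖a - c‖ * ‖a - c‖)⁻¹}) +
          ∫⁻ t in Set.Ioi Bv, (volume.restrict S) {a | t < (‖a - c‖ * ‖a - c‖)⁻¹}) := by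
        rw [hsplit]
        exact (lintegral_union_le _ _ _).trans
          (add_le_add le_rfl (lintegral_union_le _ _ _))
    _ ≤ V + (ENNReal.ofReal (2 * (Real.log R - Real.log r)) * V + 0) :=
        add_le_add h1 (add_le_add h2 h3.le)
    _ = (1 + ENNReal.ofReal (2 * (Real.log R - Real.log r))) * V := by
        rw [add_zero, add_mul, one_mul]

private lemma lint_diag (c : E2) {ε : ℝ} (hε : 0 < ε) :
    ∫⁻ x in Metric.ball c ε, ENNReal.ofReal ((‖x - c‖ * ‖x - c‖)⁻¹) = ∞ := by
  have hmeas : Measurable fun x : E2 => (‖x - c‖ * ‖x - c‖)⁻¹ :=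
    (((continuous_id.sub continuous_const).norm.mul
      (continuous_id.sub continuous_const).norm).measurable).inv
  rw [lintegral_eq_lintegral_meas_lt _
    (ae_of_all _ fun x => inv_nonneg.2 (mul_nonneg (norm_nonneg _) (norm_nonneg _)))
    hmeas.aemeasurable]
  set A : ℝ := (ε * ε)⁻¹ with hA
  have hA0 : (0:ℝ) < A := inv_pos.2 (by positivity)
  have hV0 : V ≠ 0 := (measure_ball_pos volume _ one_pos).ne'
  have hb : ∀ t ∈ Set.Ioi A,
      ENNReal.ofReal t⁻¹ * V ≤
        (volume.restrict (Metric.ball c ε)) {a | t < (‖a - c‖ * ‖a - c‖)⁻¹} := by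
    intro t ht
    have ht0 : (0:ℝ) < t := hA0.trans ht
    have hsub : Metric.ball c (Real.sqrt t⁻¹) \ {c} ⊆
        {a : E2 | t < (‖a - c‖ * ‖a - c‖)⁻¹} ∩ Metric.ball c ε := by
      rintro a ⟨hab, hac⟩
      have hna : ‖a - c‖ < Real.sqrt t⁻¹ := by
        simpa [Metric.mem_ball, dist_eq_norm] using hab
      have hpos : (0:ℝ) < ‖a - c‖ := by
        rw [norm_pos_iff, sub_ne_zero]
        simpa using hac
      constructor
      · have hq : ‖a - c‖ * ‖a - c‖ < t⁻¹ := by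
          rw [show ‖a - c‖ * ‖a - c‖ = ‖a - c‖ ^ 2 by ring]
          exact (Real.lt_sqrt (norm_nonneg _)).1 hna
        have := inv_strictAnti₀ (by positivity) hq
        rwa [inv_inv] at this
      · have hsq : Real.sqrt t⁻¹ ≤ ε := by
          have h1 : t⁻¹ ≤ ε * ε := by
            have := inv_anti₀ hA0 ht.le
            rwa [hA, inv_inv] at this
          calc Real.sqrt t⁻¹ ≤ Real.sqrt (ε * ε) := Real.sqrt_le_sqrt h1
          _ = ε := Real.sqrt_mul_self hε.le
        have := hna.trans_le hsq
        simpa [Metric.mem_ball, dist_eq_norm] using this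
    calc ENNReal.ofReal t⁻¹ * V
        = volume (Metric.ball c (Real.sqrt t⁻¹)) := by
          rw [Measure.addHaar_ball volume c (Real.sqrt_nonneg _), finrank_euclideanSpace_fin,
            Real.sq_sqrt (inv_nonneg.2 ht0.le)]
      _ = volume (Metric.ball c (Real.sqrt t⁻¹) \ {c}) := (measure_diff_null (measure_singleton c)).symm
      _ ≤ volume ({a : E2 | t < (‖a - c‖ * ‖a - c‖)⁻¹} ∩ Metric.ball c ε) := measure_mono hsub
      _ = (volume.restrict (Metric.ball c ε)) {a | t < (‖a - c‖ * ‖a - c‖)⁻¹} :=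
          (Measure.restrict_apply' measurableSet_ball).symm
  refine top_unique ?_
  calc (⊤ : ℝ≥0∞) = (∫⁻ t in Set.Ioi A, ENNReal.ofReal t⁻¹) * V := by
        rw [lint_Ioi_inv hA0, ENNReal.top_mul hV0]
    _ = ∫⁻ t in Set.Ioi A, ENNReal.ofReal t⁻¹ * V :=
        (lintegral_mul_const' _ _ measure_ball_lt_top.ne).symm
    _ ≤ ∫⁻ t in Set.Ioi A, (volume.restrict (Metric.ball c ε)) {a | t < (‖a - c‖ * ‖a - c‖)⁻¹} :=
        lintegral_mono_ae ((ae_restrict_iff' measurableSet_Ioi).2 (ae_of_all _ hb))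
    _ ≤ ∫⁻ t in Set.Ioi 0, (volume.restrict (Metric.ball c ε)) {a | t < (‖a - c‖ * ‖a - c‖)⁻¹} :=
        lintegral_mono_set (Set.Ioi_subset_Ioi hA0.le)

private lemma key_estimate {B : Set E2} {R₀ : ℝ} (hR₀ : 1 ≤ R₀)
    (hB : B ⊆ Metric.ball 0 R₀) {y z : E2} (hy : y ∈ B) (hz : z ∈ B) (hyz : y ≠ z) :
    ∫⁻ x in B, ENNReal.ofReal ((‖x - y‖ * ‖x - z‖)⁻¹) ≤
      (6 + ENNReal.ofReal (4 * Real.log (12 * R₀))) * V +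
        4 * V * ENNReal.ofReal |Real.log ‖y - z‖| := by
  have hR₀0 : (0:ℝ) < R₀ := lt_of_lt_of_le one_pos hR₀
  set d : ℝ := ‖y - z‖ with hd
  have hd0 : (0:ℝ) < d := by rw [hd]; exact norm_pos_iff.2 (sub_ne_zero.2 hyz)
  have hd2 : (0:ℝ) < d / 2 := by linarith
  have hyR : ‖y‖ < R₀ := by simpa [Metric.mem_ball, dist_eq_norm] using hB hy
  have hzR : ‖z‖ < R₀ := by simpa [Metric.mem_ball, dist_eq_norm] using hB hz
  have hdR : d < 2 * R₀ := by
    have := norm_sub_le y z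
    rw [← hd] at this
    linarith
  set b1 : Set E2 := Metric.ball y (d / 2) with hb1
  set b2 : Set E2 := Metric.ball z (d / 2) with hb2
  set S : Set E2 := B \ (b1 ∪ b2) with hSdef
  have hcover : B ⊆ (b1 ∪ b2) ∪ S := by
    intro x hx
    by_cases h : x ∈ b1 ∪ b2
    · exact Or.inl h
    · exact Or.inr ⟨hx, h⟩
  have hmono : ∫⁻ x in B, ENNReal.ofReal ((‖x - y‖ * ‖x - z‖)⁻¹) ≤
      ((∫⁻ x in b1, ENNReal.ofReal ((‖x - y‖ * ‖x - z‖)⁻¹)) +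
        ∫⁻ x in b2, ENNReal.ofReal ((‖x - y‖ * ‖x - z‖)⁻¹)) +
        ∫⁻ x in S, ENNReal.ofReal ((‖x - y‖ * ‖x - z‖)⁻¹) := by
    refine (lintegral_mono_set hcover).trans ?_
    refine (lintegral_union_le _ _ _).trans ?_
    exact add_le_add (lintegral_union_le _ _ _) le_rfl
  -- ball piece 1
  have hball1 : ∫⁻ x in b1, ENNReal.ofReal ((‖x - y‖ * ‖x - z‖)⁻¹) ≤ 2 * V := by
    have hpw : ∀ x ∈ b1, ENNReal.ofReal ((‖x - y‖ * ‖x - z‖)⁻¹) ≤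
        ENNReal.ofReal ((d / 2)⁻¹) * ENNReal.ofReal ‖x - y‖⁻¹ := by
      intro x hx
      have hxz : d / 2 ≤ ‖x - z‖ := by
        have h1 : dist y z ≤ dist y x + dist x z := dist_triangle y x z
        have h2 : dist y x < d / 2 := by
          rw [dist_comm]; simpa [hb1, Metric.mem_ball] using hx
        have h3 : dist y z = d := by rw [dist_eq_norm, hd]
        have h4 : dist x z = ‖x - z‖ := dist_eq_norm x z
        linarith
      rw [← ENNReal.ofReal_mul (by positivity)]
      apply ENNReal.ofReal_le_ofReal
      rw [mul_inv]
      calc ‖x - y‖⁻¹ * ‖x - z‖⁻¹ ≤ ‖x - y‖⁻¹ * (d / 2)⁻¹ := by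
            apply mul_le_mul_of_nonneg_left _ (inv_nonneg.2 (norm_nonneg _))
            exact inv_anti₀ hd2 hxz
        _ = (d / 2)⁻¹ * ‖x - y‖⁻¹ := mul_comm _ _
    calc ∫⁻ x in b1, ENNReal.ofReal ((‖x - y‖ * ‖x - z‖)⁻¹)
        ≤ ∫⁻ x in b1, ENNReal.ofReal ((d / 2)⁻¹) * ENNReal.ofReal ‖x - y‖⁻¹ :=
          lintegral_mono_ae ((ae_restrict_iff' measurableSet_ball).2 (ae_of_all _ hpw))
      _ = ENNReal.ofReal ((d / 2)⁻¹) * ∫⁻ x in b1, ENNReal.ofReal ‖x - y‖⁻¹ :=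
          lintegral_const_mul' _ _ ENNReal.ofReal_ne_top
      _ ≤ ENNReal.ofReal ((d / 2)⁻¹) * (ENNReal.ofReal (2 * (d / 2)) * V) :=
          mul_le_mul_right (lint_ball y hd2) _
      _ = 2 * V := by
          rw [← mul_assoc, ← ENNReal.ofReal_mul (by positivity)]
          have : (d / 2)⁻¹ * (2 * (d / 2)) = 2 := by field_simp
          rw [this, ENNReal.ofReal_ofNat]
  -- ball piece 2
  have hball2 : ∫⁻ x in b2, ENNReal.ofReal ((‖x - y‖ * ‖x - z‖)⁻¹) ≤ 2 * V := by
    have hpw : ∀ x ∈ b2, ENNReal.ofReal ((‖x - y‖ * ‖x - z‖)⁻¹) ≤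
        ENNReal.ofReal ((d / 2)⁻¹) * ENNReal.ofReal ‖x - z‖⁻¹ := by
      intro x hx
      have hxy : d / 2 ≤ ‖x - y‖ := by
        have h1 : dist y z ≤ dist y x + dist x z := dist_triangle y x z
        have h2 : dist x z < d / 2 := by simpa [hb2, Metric.mem_ball] using hx
        have h3 : dist y z = d := by rw [dist_eq_norm, hd]
        have h4 : dist y x = ‖x - y‖ := by rw [dist_comm, dist_eq_norm]
        linarith
      rw [← ENNReal.ofReal_mul (by positivity)]
      apply ENNReal.ofReal_le_ofReal
      rw [mul_inv]
      exact mul_le_mul_of_nonneg_right (inv_anti₀ hd2 hxy)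
        (inv_nonneg.2 (norm_nonneg _))
    calc ∫⁻ x in b2, ENNReal.ofReal ((‖x - y‖ * ‖x - z‖)⁻¹)
        ≤ ∫⁻ x in b2, ENNReal.ofReal ((d / 2)⁻¹) * ENNReal.ofReal ‖x - z‖⁻¹ :=
          lintegral_mono_ae ((ae_restrict_iff' measurableSet_ball).2 (ae_of_all _ hpw))
      _ = ENNReal.ofReal ((d / 2)⁻¹) * ∫⁻ x in b2, ENNReal.ofReal ‖x - z‖⁻¹ :=
          lintegral_const_mul' _ _ ENNReal.ofReal_ne_top
      _ ≤ ENNReal.ofReal ((d / 2)⁻¹) * (ENNReal.ofReal (2 * (d / 2)) * V) :=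
          mul_le_mul_right (lint_ball z hd2) _
      _ = 2 * V := by
          rw [← mul_assoc, ← ENNReal.ofReal_mul (by positivity)]
          have : (d / 2)⁻¹ * (2 * (d / 2)) = 2 := by field_simp
          rw [this, ENNReal.ofReal_ofNat]
  -- annulus piece
  have hd26 : d / 2 ≤ 6 * R₀ := by linarith
  have hSsub1 : S ⊆ Metric.ball y (6 * R₀) \ Metric.ball y (d / 2) := by
    rintro x ⟨hxB, hxn⟩
    refine ⟨?_, fun h => hxn (Or.inl h)⟩
    have hxR : ‖x‖ < R₀ := by simpa [Metric.mem_ball, dist_eq_norm] using hB hxB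
    have : ‖x - y‖ ≤ ‖x‖ + ‖y‖ := norm_sub_le x y
    rw [Metric.mem_ball, dist_eq_norm]
    linarith
  have hSsub2 : S ⊆ Metric.ball z (6 * R₀) \ Metric.ball z (d / 2) := by
    rintro x ⟨hxB, hxn⟩
    refine ⟨?_, fun h => hxn (Or.inr h)⟩
    have hxR : ‖x‖ < R₀ := by simpa [Metric.mem_ball, dist_eq_norm] using hB hxB
    have : ‖x - z‖ ≤ ‖x‖ + ‖z‖ := norm_sub_le x z
    rw [Metric.mem_ball, dist_eq_norm]
    linarith
  have hpwS : ∀ x : E2, ENNReal.ofReal ((‖x - y‖ * ‖x - z‖)⁻¹) ≤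
      ENNReal.ofReal ((‖x - y‖ * ‖x - y‖)⁻¹) + ENNReal.ofReal ((‖x - z‖ * ‖x - z‖)⁻¹) := by
    intro x
    rw [← ENNReal.ofReal_add (by positivity) (by positivity)]
    apply ENNReal.ofReal_le_ofReal
    rw [mul_inv, mul_inv, mul_inv]
    set u : ℝ := ‖x - y‖⁻¹
    set v : ℝ := ‖x - z‖⁻¹
    have hu : (0:ℝ) ≤ u := inv_nonneg.2 (norm_nonneg _)
    have hv : (0:ℝ) ≤ v := inv_nonneg.2 (norm_nonneg _)
    nlinarith [sq_nonneg (u - v), mul_nonneg hu hv]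
  have hmeas1 : Measurable fun x : E2 => ENNReal.ofReal ((‖x - y‖ * ‖x - y‖)⁻¹) :=
    ((((continuous_id.sub continuous_const).norm.mul
      (continuous_id.sub continuous_const).norm).measurable).inv).ennreal_ofReal
  have hW : ∀ c : E2, ∫⁻ x in Metric.ball c (6 * R₀) \ Metric.ball c (d / 2),
      ENNReal.ofReal ((‖x - c‖ * ‖x - c‖)⁻¹) ≤
        (1 + ENNReal.ofReal (2 * (Real.log (6 * R₀) - Real.log (d / 2)))) * V :=
    fun c => lint_annulus c hd2 hd26
  have hS : ∫⁻ x in S, ENNReal.ofReal ((‖x - y‖ * ‖x - z‖)⁻¹) ≤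
      2 * ((1 + ENNReal.ofReal (2 * (Real.log (6 * R₀) - Real.log (d / 2)))) * V) := by
    calc ∫⁻ x in S, ENNReal.ofReal ((‖x - y‖ * ‖x - z‖)⁻¹)
        ≤ ∫⁻ x in S, (ENNReal.ofReal ((‖x - y‖ * ‖x - y‖)⁻¹) +
            ENNReal.ofReal ((‖x - z‖ * ‖x - z‖)⁻¹)) :=
          lintegral_mono fun x => hpwS x
      _ = (∫⁻ x in S, ENNReal.ofReal ((‖x - y‖ * ‖x - y‖)⁻¹)) +
            ∫⁻ x in S, ENNReal.ofReal ((‖x - z‖ * ‖x - z‖)⁻¹) :=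
          lintegral_add_left hmeas1 _
      _ ≤ (∫⁻ x in Metric.ball y (6 * R₀) \ Metric.ball y (d / 2),
            ENNReal.ofReal ((‖x - y‖ * ‖x - y‖)⁻¹)) +
          ∫⁻ x in Metric.ball z (6 * R₀) \ Metric.ball z (d / 2),
            ENNReal.ofReal ((‖x - z‖ * ‖x - z‖)⁻¹) :=
          add_le_add (lintegral_mono_set hSsub1) (lintegral_mono_set hSsub2)
      _ ≤ 2 * ((1 + ENNReal.ofReal (2 * (Real.log (6 * R₀) - Real.log (d / 2)))) * V) := by
          rw [two_mul]
          exact add_le_add (hW y) (hW z)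
  -- combine and massage logs
  have hlog : 2 * (Real.log (6 * R₀) - Real.log (d / 2)) ≤
      4 * Real.log (12 * R₀) / 2 + 2 * |Real.log d| := by
    have h1 : Real.log (d / 2) = Real.log d - Real.log 2 := Real.log_div hd0.ne' two_ne_zero
    have h2 : Real.log (12 * R₀) = Real.log 2 + Real.log (6 * R₀) := by
      rw [← Real.log_mul two_ne_zero (by positivity)]
      norm_num
      ring_nf
    have h3 : -Real.log d ≤ |Real.log d| := neg_le_abs _
    have h4 : (0:ℝ) ≤ Real.log (12 * R₀) := Real.log_nonneg (by linarith)
    nlinarith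
  have hfinal : 2 * ((1 + ENNReal.ofReal (2 * (Real.log (6 * R₀) - Real.log (d / 2)))) * V) ≤
      (2 + ENNReal.ofReal (4 * Real.log (12 * R₀))) * V +
        4 * V * ENNReal.ofReal |Real.log d| := by
    have step1 : ENNReal.ofReal (2 * (Real.log (6 * R₀) - Real.log (d / 2))) ≤
        ENNReal.ofReal (4 * Real.log (12 * R₀) / 2) + ENNReal.ofReal (2 * |Real.log d|) :=
      (ENNReal.ofReal_le_ofReal hlog).trans (ENNReal.ofReal_add_le)
    have step2 : ENNReal.ofReal (2 * |Real.log d|) = 2 * ENNReal.ofReal |Real.log d| := by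
      rw [ENNReal.ofReal_mul (by norm_num), ENNReal.ofReal_ofNat]
    calc 2 * ((1 + ENNReal.ofReal (2 * (Real.log (6 * R₀) - Real.log (d / 2)))) * V)
        ≤ 2 * ((1 + (ENNReal.ofReal (4 * Real.log (12 * R₀) / 2) +
            2 * ENNReal.ofReal |Real.log d|)) * V) := by
          gcongr
          rw [← step2]
          exact step1
      _ = (2 + ENNReal.ofReal (4 * Real.log (12 * R₀) / 2) * 2) * V +
            4 * V * ENNReal.ofReal |Real.log d| := by ring
      _ = (2 + ENNReal.ofReal (4 * Real.log (12 * R₀))) * V +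
            4 * V * ENNReal.ofReal |Real.log d| := by
          have hL : (0:ℝ) ≤ Real.log (12 * R₀) := Real.log_nonneg (by linarith)
          congr 3
          rw [← ENNReal.ofReal_ofNat 2, ← ENNReal.ofReal_mul (by linarith)]
          congr 1
          ring
  calc ∫⁻ x in B, ENNReal.ofReal ((‖x - y‖ * ‖x - z‖)⁻¹)
      ≤ (2 * V + 2 * V) + 2 * ((1 + ENNReal.ofReal (2 * (Real.log (6 * R₀) -
          Real.log (d / 2)))) * V) :=
        hmono.trans (add_le_add (add_le_add hball1 hball2) hS)
    _ ≤ (2 * V + 2 * V) + ((2 + ENNReal.ofReal (4 * Real.log (12 * R₀))) * V +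
          4 * V * ENNReal.ofReal |Real.log d| ) := by gcongr
    _ = (6 + ENNReal.ofReal (4 * Real.log (12 * R₀))) * V +
          4 * V * ENNReal.ofReal |Real.log d| := by ring

/-- If `μ` is a probability measure supported in a compact `K ⊆ B ⊆ ℝ²`
(`B` bounded open) with finite logarithmic energy, then
`γ(y,z) = ∫_B 1/(|x-y||x-z|) dx` belongs to `L¹(B×B, μ⊗μ)`. -/
theorem stmt3
    (K B : Set (EuclideanSpace ℝ (Fin 2))) (hK : IsCompact K)
    (hBopen : IsOpen B) (hBbd : Bornology.IsBounded B) (hKB : K ⊆ B)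
    (μ : Measure (EuclideanSpace ℝ (Fin 2))) [IsProbabilityMeasure μ]
    (hμK : μ Kᶜ = 0)
    (henergy : Integrable
      (fun p : EuclideanSpace ℝ (Fin 2) × EuclideanSpace ℝ (Fin 2) =>
        Real.log ‖p.1 - p.2‖) (μ.prod μ)) :
    Integrable
      (fun p : EuclideanSpace ℝ (Fin 2) × EuclideanSpace ℝ (Fin 2) =>
        ∫ x in B, (‖x - p.1‖ * ‖x - p.2‖)⁻¹) (μ.prod μ) := by
  classical
  obtain ⟨R₁, hR₁⟩ := hBbd.subset_ball (0 : E2)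
  set R₀ : ℝ := max R₁ 1 with hR₀def
  have hR₀ : (1:ℝ) ≤ R₀ := le_max_right _ _
  have hBsub : B ⊆ Metric.ball (0 : E2) R₀ :=
    hR₁.trans (Metric.ball_subset_ball (le_max_left _ _))
  -- the ENNReal-valued integral
  set g : E2 × E2 → ℝ≥0∞ :=
    fun p => ∫⁻ x in B, ENNReal.ofReal ((‖x - p.1‖ * ‖x - p.2‖)⁻¹) with hgdef
  have hker : Measurable fun q : (E2 × E2) × E2 =>
      ENNReal.ofReal ((‖q.2 - q.1.1‖ * ‖q.2 - q.1.2‖)⁻¹) := by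
    apply Measurable.ennreal_ofReal
    apply Measurable.inv
    exact (measurable_snd.sub measurable_fst.fst).norm.mul
      (measurable_snd.sub measurable_fst.snd).norm
  have hg : Measurable g := hker.lintegral_prod_right'
  have hinner_meas : ∀ p : E2 × E2,
      Measurable fun x : E2 => (‖x - p.1‖ * ‖x - p.2‖)⁻¹ := fun p =>
    (((continuous_id.sub continuous_const).norm.mul
      (continuous_id.sub continuous_const).norm).measurable).inv
  have f_eq : ∀ p : E2 × E2,
      (∫ x in B, (‖x - p.1‖ * ‖x - p.2‖)⁻¹) = (g p).toReal := by
    intro p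
    rw [hgdef]
    exact integral_eq_lintegral_of_nonneg_ae
      (ae_of_all _ fun x => inv_nonneg.2 (mul_nonneg (norm_nonneg _) (norm_nonneg _)))
      (hinner_meas p).aestronglyMeasurable
  have hrw : (fun p : E2 × E2 => ∫ x in B, (‖x - p.1‖ * ‖x - p.2‖)⁻¹) =
      fun p => (g p).toReal := funext f_eq
  rw [hrw]
  -- constants
  set VV : ℝ≥0∞ := volume (Metric.ball (0 : E2) 1) with hVV
  have hVfin : VV ≠ ∞ := measure_ball_lt_top.ne
  set C₁ : ℝ≥0∞ := (6 + ENNReal.ofReal (4 * Real.log (12 * R₀))) * VV with hC₁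
  set C₂ : ℝ≥0∞ := 4 * VV with hC₂
  have hC₁fin : C₁ ≠ ∞ := by
    rw [hC₁]
    exact ENNReal.mul_ne_top (by simp [ENNReal.ofReal_ne_top, ENNReal.mul_eq_top]) hVfin
  have hC₂fin : C₂ ≠ ∞ := ENNReal.mul_ne_top (by simp) hVfin
  set c₁ : ℝ := C₁.toReal with hc₁
  set c₂ : ℝ := C₂.toReal with hc₂
  -- a.e. both coordinates in K
  have hKm : MeasurableSet K := hK.isClosed.measurableSet
  have hae1 : ∀ᵐ p : E2 × E2 ∂(μ.prod μ), p.1 ∈ K := by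
    rw [ae_iff]
    have : {p : E2 × E2 | ¬ p.1 ∈ K} = Kᶜ ×ˢ (Set.univ : Set E2) := by
      ext p; simp [Set.mem_prod]
    rw [this, Measure.prod_prod, hμK, zero_mul]
  have hae2 : ∀ᵐ p : E2 × E2 ∂(μ.prod μ), p.2 ∈ K := by
    rw [ae_iff]
    have : {p : E2 × E2 | ¬ p.2 ∈ K} = (Set.univ : Set E2) ×ˢ Kᶜ := by
      ext p; simp [Set.mem_prod]
    rw [this, Measure.prod_prod, hμK, mul_zero]
  -- dominating function
  have h_int : Integrable
      (fun p : E2 × E2 => c₁ + c₂ * |Real.log ‖p.1 - p.2‖|) (μ.prod μ) :=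
    (integrable_const c₁).add (henergy.abs.const_mul c₂)
  refine Integrable.mono' h_int
    ((ENNReal.measurable_toReal.comp hg).aestronglyMeasurable) ?_
  filter_upwards [hae1, hae2] with p hp1 hp2
  rw [Real.norm_of_nonneg ENNReal.toReal_nonneg]
  by_cases hpq : p.1 = p.2
  · -- diagonal: the lintegral is infinite, so toReal is 0
    obtain ⟨ε, hε, hball⟩ := Metric.isOpen_iff.1 hBopen p.1 (hKB hp1)
    have hginf : g p = ∞ := by
      apply top_unique
      calc (⊤ : ℝ≥0∞) = ∫⁻ x in Metric.ball p.1 ε,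
            ENNReal.ofReal ((‖x - p.1‖ * ‖x - p.1‖)⁻¹) := (lint_diag p.1 hε).symm
        _ = ∫⁻ x in Metric.ball p.1 ε,
            ENNReal.ofReal ((‖x - p.1‖ * ‖x - p.2‖)⁻¹) := by rw [← hpq]
        _ ≤ g p := lintegral_mono_set hball
    rw [hginf, ENNReal.toReal_top]
    have h1 : (0:ℝ) ≤ c₁ := ENNReal.toReal_nonneg
    have h2 : (0:ℝ) ≤ c₂ := ENNReal.toReal_nonneg
    have h3 : (0:ℝ) ≤ |Real.log ‖p.1 - p.2‖| := abs_nonneg _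
    positivity
  · have hkey := key_estimate hR₀ hBsub (hKB hp1) (hKB hp2) hpq
    have hfin : C₁ + C₂ * ENNReal.ofReal |Real.log ‖p.1 - p.2‖| ≠ ∞ :=
      ENNReal.add_ne_top.2 ⟨hC₁fin, ENNReal.mul_ne_top hC₂fin ENNReal.ofReal_ne_top⟩
    calc (g p).toReal ≤ (C₁ + C₂ * ENNReal.ofReal |Real.log ‖p.1 - p.2‖|).toReal := by
          apply ENNReal.toReal_mono hfin
          rw [hC₁, hC₂]
          exact hkey
      _ = c₁ + c₂ * |Real.log ‖p.1 - p.2‖| := by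
          rw [ENNReal.toReal_add hC₁fin (ENNReal.mul_ne_top hC₂fin ENNReal.ofReal_ne_top)]
          congr 1
          rw [ENNReal.toReal_mul, ENNReal.toReal_ofReal (abs_nonneg _)]


end
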